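/- Let A be a herd in a braided monoidal category C, and let L, M be right A-comodules with M having a dual. Equip Q(L,M,M) = L ⊗ M* ⊗ M with the right A-comodule structure ρ_Q. Then α := (1_L ⊗ ev_M) composed with the unitor : L ⊗ M* ⊗ M ⟶ L is a morphism of right A-comodules: ρ_L ∘ α = (α ⊗ 1_A) ∘ ρ_Q. -/

import Mathlib

open CategoryTheory MonoidalCategory Category

universe v u

variable {C : Type u} [Category.{v} C] [MonoidalCategory C] [BraidedCategory C]

/-- The braiding of the first two factors of a right-nested triple tensor product. -/
def swap3 (X Y Z : C) : X ⊗ Y ⊗ Z ⟶ Y ⊗ X ⊗ Z :=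
  (α_ X Y Z).inv ≫ ((β_ X Y).hom ▷ Z) ≫ (α_ Y X Z).hom

def insertC (M Ms X : C) (coev : 𝟙_ C ⟶ M ⊗ Ms) : X ⟶ M ⊗ (Ms ⊗ X) :=
  (λ_ X).inv ≫ (coev ▷ X) ≫ (α_ M Ms X).hom

def contractC (M Ms W : C) (ev : Ms ⊗ M ⟶ 𝟙_ C) : Ms ⊗ (M ⊗ W) ⟶ W :=
  (α_ Ms M W).inv ≫ (ev ▷ W) ≫ (λ_ W).hom

lemma insertC_natural (M Ms : C) (coev : 𝟙_ C ⟶ M ⊗ Ms) {X Y : C} (f : X ⟶ Y) :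
    insertC M Ms X coev ≫ (M ◁ (Ms ◁ f)) = f ≫ insertC M Ms Y coev := by
  simp only [insertC, assoc]
  rw [← associator_naturality_right, ← whisker_exchange_assoc, ← leftUnitor_inv_naturality_assoc]

lemma contractC_natural (M Ms : C) (ev : Ms ⊗ M ⟶ 𝟙_ C) {X Y : C} (f : X ⟶ Y) :
    (Ms ◁ (M ◁ f)) ≫ contractC M Ms Y ev = contractC M Ms X ev ≫ f := by
  simp only [contractC, assoc]
  rw [associator_inv_naturality_right_assoc, whisker_exchange_assoc, leftUnitor_naturality]

lemma swap3_natural (X Y : C) {Z Z' : C} (g : Z ⟶ Z') :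
    (X ◁ (Y ◁ g)) ≫ swap3 X Y Z' = swap3 X Y Z ≫ (Y ◁ (X ◁ g)) := by
  simp only [swap3, assoc]
  rw [associator_inv_naturality_right_assoc, whisker_exchange_assoc, associator_naturality_right]

lemma crossC (M Ms : C) (ev : Ms ⊗ M ⟶ 𝟙_ C) (X W : C) :
    swap3 X Ms (M ⊗ W) ≫ (Ms ◁ swap3 X M W) ≫ contractC M Ms (X ⊗ W) ev
      = X ◁ contractC M Ms W ev := by
  calc swap3 X Ms (M ⊗ W) ≫ (Ms ◁ swap3 X M W) ≫ contractC M Ms (X ⊗ W) ev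
      = (X ◁ (α_ Ms M W).inv) ≫ (α_ X (Ms ⊗ M) W).inv ≫
          (((β_ X (Ms ⊗ M)).hom ≫ (ev ▷ X)) ▷ W) ≫ ((λ_ X).hom ▷ W) := by
        simp only [swap3, contractC, comp_whiskerRight, BraidedCategory.braiding_tensor_right_hom,
          assoc]
        monoidal
    _ = (X ◁ (α_ Ms M W).inv) ≫ (α_ X (Ms ⊗ M) W).inv ≫
          ((((X ◁ ev) ≫ (β_ X (𝟙_ C)).hom)) ▷ W) ≫ ((λ_ X).hom ▷ W) := by
        rw [BraidedCategory.braiding_naturality_right]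
    _ = X ◁ contractC M Ms W ev := by
        rw [braiding_tensorUnit_right]
        simp only [contractC, comp_whiskerRight, assoc]
        monoidal

lemma snakeW (M Ms : C) (ev : Ms ⊗ M ⟶ 𝟙_ C) (coev : 𝟙_ C ⟶ M ⊗ Ms)
    (hsnake₁ : (λ_ M).inv ≫ (coev ▷ M) ≫ (α_ M Ms M).hom ≫ (M ◁ ev) ≫ (ρ_ M).hom = 𝟙 M)
    (W : C) :
    insertC M Ms (M ⊗ W) coev ≫ (M ◁ contractC M Ms W ev) = 𝟙 (M ⊗ W) := by
  calc insertC M Ms (M ⊗ W) coev ≫ (M ◁ contractC M Ms W ev)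
      = ((λ_ M).inv ≫ (coev ▷ M) ≫ (α_ M Ms M).hom ≫ (M ◁ ev) ≫ (ρ_ M).hom) ▷ W := by
        simp only [insertC, contractC, comp_whiskerRight, MonoidalCategory.whiskerLeft_comp, assoc]
        monoidal
    _ = 𝟙 (M ⊗ W) := by rw [hsnake₁]; simp

lemma killBraids (M Ms A : C) (ev : Ms ⊗ M ⟶ 𝟙_ C) :
    (A ◁ swap3 A Ms (M ⊗ A)) ≫ swap3 A Ms (A ⊗ (M ⊗ A)) ≫ (Ms ◁ (A ◁ swap3 A M A)) ≫
      (Ms ◁ swap3 A M (A ⊗ A)) ≫ contractC M Ms (A ⊗ A ⊗ A) ev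
      = A ◁ (A ◁ contractC M Ms A ev) := by
  have nat : swap3 A Ms (A ⊗ (M ⊗ A)) ≫ (Ms ◁ (A ◁ swap3 A M A))
      = (A ◁ (Ms ◁ swap3 A M A)) ≫ swap3 A Ms (M ⊗ (A ⊗ A)) :=
    (swap3_natural A Ms (swap3 A M A)).symm
  rw [reassoc_of% nat]
  rw [crossC M Ms ev A (A ⊗ A)]
  rw [← MonoidalCategory.whiskerLeft_comp, ← MonoidalCategory.whiskerLeft_comp]
  rw [← crossC M Ms ev A A]

lemma lemA (M Ms A : C) (ev : Ms ⊗ M ⟶ 𝟙_ C) (coev : 𝟙_ C ⟶ M ⊗ Ms)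
    (ρM : M ⟶ M ⊗ A) (del : A ⟶ A ⊗ A)
    (hM₁ : ρM ≫ (ρM ▷ A) ≫ (α_ M A A).hom = ρM ≫ (M ◁ del))
    (hsnake₁ : (λ_ M).inv ≫ (coev ▷ M) ≫ (α_ M Ms M).hom ≫ (M ◁ ev) ≫ (ρ_ M).hom = 𝟙 M) :
    (Ms ◁ insertC M Ms M coev) ≫ (𝟙 Ms ⊗ₘ (ρM ⊗ₘ (𝟙 Ms ⊗ₘ ρM))) ≫
      (α_ Ms (M ⊗ A) (Ms ⊗ (M ⊗ A))).inv ≫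
      (contractC M Ms A ev ▷ (Ms ⊗ (M ⊗ A))) ≫ (A ◁ contractC M Ms A ev)
      = (Ms ◁ ρM) ≫ contractC M Ms A ev ≫ del := by
  have hM₁' : ρM ≫ (ρM ▷ A) = ρM ≫ (M ◁ del) ≫ (α_ M A A).inv := by
    rw [← cancel_mono (α_ M A A).hom]; simpa using hM₁
  have split : (𝟙 Ms ⊗ₘ (ρM ⊗ₘ (𝟙 Ms ⊗ₘ ρM)))
      = (Ms ◁ (M ◁ (Ms ◁ ρM))) ≫ (Ms ◁ (ρM ▷ (Ms ⊗ (M ⊗ A)))) := by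
    simp [tensorHom_def', MonoidalCategory.whiskerLeft_comp]
  have key : insertC M Ms M coev ≫ (M ◁ ((Ms ◁ ρM) ≫ contractC M Ms A ev)) = ρM := by
    rw [MonoidalCategory.whiskerLeft_comp, ← assoc, insertC_natural M Ms coev ρM, assoc,
      snakeW M Ms ev coev hsnake₁ A, comp_id]
  have coh : (Ms ◁ (α_ M A A).inv) ≫ (α_ Ms (M ⊗ A) A).inv ≫ (contractC M Ms A ev ▷ A)
      = contractC M Ms (A ⊗ A) ev := by
    simp only [contractC, comp_whiskerRight, assoc]; monoidal
  rw [split, assoc, associator_inv_naturality_middle_assoc, ← comp_whiskerRight_assoc]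
  rw [← whisker_exchange]
  rw [associator_inv_naturality_right_assoc]
  rw [← MonoidalCategory.whiskerLeft_comp_assoc]
  rw [← associator_inv_naturality_right_assoc]
  rw [← MonoidalCategory.whiskerLeft_comp_assoc]
  rw [key]
  rw [comp_whiskerRight, ← associator_inv_naturality_middle_assoc,
    ← MonoidalCategory.whiskerLeft_comp_assoc, hM₁']
  simp only [MonoidalCategory.whiskerLeft_comp, assoc]
  rw [coh]
  rw [contractC_natural M Ms ev del]

lemma lemC (M Ms A : C) (ev : Ms ⊗ M ⟶ 𝟙_ C) (ρM : M ⟶ M ⊗ A) (eps : A ⟶ 𝟙_ C)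
    (hM₂ : ρM ≫ (M ◁ eps) ≫ (ρ_ M).hom = 𝟙 M) :
    (Ms ◁ ρM) ≫ contractC M Ms A ev ≫ eps = ev := by
  have hM₂' : ρM ≫ (M ◁ eps) = (ρ_ M).inv := by
    rw [← cancel_mono (ρ_ M).hom]; simpa using hM₂
  rw [← contractC_natural M Ms ev eps, ← MonoidalCategory.whiskerLeft_comp_assoc, hM₂']
  simp only [contractC, assoc]
  monoidal

/-- A herd in a braided monoidal category `C`: a comonoid `A` together with a
comonoid morphism `q : A ⊗ A° ⊗ A ⟶ A` satisfying para-associativity and the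
two unit laws. -/
structure Herd (C : Type u) [Category.{v} C] [MonoidalCategory C] [BraidedCategory C] where
  A : C
  del : A ⟶ A ⊗ A
  eps : A ⟶ 𝟙_ C
  coassoc : del ≫ (del ▷ A) ≫ (α_ A A A).hom = del ≫ (A ◁ del)
  counit_left : del ≫ (eps ▷ A) ≫ (λ_ A).hom = 𝟙 A
  counit_right : del ≫ (A ◁ eps) ≫ (ρ_ A).hom = 𝟙 A
  q : A ⊗ A ⊗ A ⟶ A
  q_counit : q ≫ eps = (eps ⊗ₘ eps ⊗ₘ eps) ≫ (𝟙_ C ◁ (λ_ (𝟙_ C)).hom) ≫ (λ_ (𝟙_ C)).hom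
  q_comul : q ≫ del =
    (del ⊗ₘ (del ≫ (β_ A A).hom) ⊗ₘ del) ≫
      (α_ A A ((A ⊗ A) ⊗ (A ⊗ A))).hom ≫ (A ◁ (A ◁ (α_ A A (A ⊗ A)).hom)) ≫
      (A ◁ swap3 A A (A ⊗ A ⊗ A)) ≫
      (A ◁ (A ◁ (A ◁ swap3 A A A))) ≫
      (A ◁ (A ◁ swap3 A A (A ⊗ A))) ≫
      (A ◁ (α_ A A (A ⊗ A ⊗ A)).inv) ≫ (α_ A (A ⊗ A) (A ⊗ A ⊗ A)).inv ≫
      (q ⊗ₘ q)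
  q_assoc : (A ◁ (α_ A A (A ⊗ A)).inv) ≫ (α_ A (A ⊗ A) (A ⊗ A)).inv ≫
      (q ▷ (A ⊗ A)) ≫ q = (A ◁ (A ◁ q)) ≫ q
  q_unit_right : (A ◁ del) ≫ q = (A ◁ eps) ≫ (ρ_ A).hom
  q_unit_left : (del ▷ A) ≫ (α_ A A A).hom ≫ q = (eps ▷ A) ≫ (λ_ A).hom

set_option maxHeartbeats 1000000 in
/-- The right `A`-comodule structure on `Q(L,M,N) = L ⊗ M* ⊗ N` induced by a herd
structure `q` on `A`. -/
def rhoQ (h : Herd C) (L M N Ms : C)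
    (ρL : L ⟶ L ⊗ h.A) (ρM : M ⟶ M ⊗ h.A) (ρN : N ⟶ N ⊗ h.A)
    (ev : Ms ⊗ M ⟶ 𝟙_ C) (coev : 𝟙_ C ⟶ M ⊗ Ms) :
    L ⊗ Ms ⊗ N ⟶ (L ⊗ Ms ⊗ N) ⊗ h.A :=
  (L ◁ (Ms ◁ ((λ_ N).inv ≫ (coev ▷ N) ≫ (α_ M Ms N).hom))) ≫
  (ρL ⊗ₘ (𝟙 Ms ⊗ₘ (ρM ⊗ₘ (𝟙 Ms ⊗ₘ ρN)))) ≫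
  ((L ⊗ h.A) ◁ ((α_ Ms (M ⊗ h.A) (Ms ⊗ (N ⊗ h.A))).inv ≫
    (((α_ Ms M h.A).inv ≫ (ev ▷ h.A) ≫ (λ_ h.A).hom) ▷ (Ms ⊗ (N ⊗ h.A))))) ≫
  (α_ L h.A (h.A ⊗ (Ms ⊗ (N ⊗ h.A)))).hom ≫
  (L ◁ (h.A ◁ swap3 h.A Ms (N ⊗ h.A))) ≫
  (L ◁ swap3 h.A Ms (h.A ⊗ (N ⊗ h.A))) ≫
  (L ◁ (Ms ◁ (h.A ◁ swap3 h.A N h.A))) ≫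
  (L ◁ (Ms ◁ swap3 h.A N (h.A ⊗ h.A))) ≫
  (L ◁ (α_ Ms N (h.A ⊗ h.A ⊗ h.A)).inv) ≫
  (α_ L (Ms ⊗ N) (h.A ⊗ h.A ⊗ h.A)).inv ≫
  ((L ⊗ Ms ⊗ N) ◁ h.q)

set_option maxHeartbeats 1000000 in
/-- Let `A` be a herd in a braided monoidal category `C`, and let
`L, M` be right `A`-comodules with `M` having a dual.  Equip
`Q(L,M,M) = L ⊗ M* ⊗ M` with the comodule structure `ρ_Q`.  Then
`α := (1_L ⊗ ev_M)` composed with the unitor is a morphism of right `A`-comodules: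
`ρ_L ∘ α = (α ⊗ 1_A) ∘ ρ_Q`. -/
theorem stmt14 (h : Herd C) (L M Ms : C)
    (ρL : L ⟶ L ⊗ h.A) (ρM : M ⟶ M ⊗ h.A)
    (ev : Ms ⊗ M ⟶ 𝟙_ C) (coev : 𝟙_ C ⟶ M ⊗ Ms)
    (hL₁ : ρL ≫ (ρL ▷ h.A) ≫ (α_ L h.A h.A).hom = ρL ≫ (L ◁ h.del))
    (hL₂ : ρL ≫ (L ◁ h.eps) ≫ (ρ_ L).hom = 𝟙 L)
    (hM₁ : ρM ≫ (ρM ▷ h.A) ≫ (α_ M h.A h.A).hom = ρM ≫ (M ◁ h.del))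
    (hM₂ : ρM ≫ (M ◁ h.eps) ≫ (ρ_ M).hom = 𝟙 M)
    (hsnake₁ : (λ_ M).inv ≫ (coev ▷ M) ≫ (α_ M Ms M).hom ≫ (M ◁ ev) ≫ (ρ_ M).hom
      = 𝟙 M)
    (hsnake₂ : (ρ_ Ms).inv ≫ (Ms ◁ coev) ≫ (α_ Ms M Ms).inv ≫ (ev ▷ Ms) ≫
      (λ_ Ms).hom = 𝟙 Ms) :
    rhoQ h L M M Ms ρL ρM ρM ev coev ≫ (((L ◁ ev) ≫ (ρ_ L).hom) ▷ h.A)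
      = ((L ◁ ev) ≫ (ρ_ L).hom) ≫ ρL := by
  have hbr : (L ◁ (α_ Ms M (h.A ⊗ h.A ⊗ h.A)).inv) ≫
      (α_ L (Ms ⊗ M) (h.A ⊗ h.A ⊗ h.A)).inv ≫
      (((L ◁ ev) ≫ (ρ_ L).hom) ▷ (h.A ⊗ h.A ⊗ h.A))
      = L ◁ contractC M Ms (h.A ⊗ h.A ⊗ h.A) ev := by
    simp only [contractC, comp_whiskerRight, MonoidalCategory.whiskerLeft_comp]
    monoidal
  simp only [rhoQ, assoc]
  rw [show (λ_ M).inv ≫ (coev ▷ M) ≫ (α_ M Ms M).hom = insertC M Ms M coev from rfl]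
  rw [show (α_ Ms M h.A).inv ≫ (ev ▷ h.A) ≫ (λ_ h.A).hom = contractC M Ms h.A ev from rfl]
  rw [whisker_exchange ((L ◁ ev) ≫ (ρ_ L).hom) h.q]
  rw [reassoc_of% hbr]
  simp only [← MonoidalCategory.whiskerLeft_comp]
  rw [reassoc_of% (killBraids M Ms h.A ev)]
  rw [tensorHom_def ρL (𝟙 Ms ⊗ₘ ρM ⊗ₘ 𝟙 Ms ⊗ₘ ρM)]
  simp only [assoc]
  rw [whisker_exchange_assoc ρL (Ms ◁ insertC M Ms M coev)]
  rw [← MonoidalCategory.whiskerLeft_comp_assoc, ← MonoidalCategory.whiskerLeft_comp_assoc]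
  rw [associator_naturality_right_assoc]
  rw [← MonoidalCategory.whiskerLeft_comp]
  simp only [← MonoidalCategory.whiskerLeft_comp_assoc]
  simp only [assoc]
  rw [lemA M Ms h.A ev coev ρM h.del hM₁ hsnake₁]
  have hfin : h.A ◁ ((Ms ◁ ρM) ≫ contractC M Ms h.A ev ≫ h.del) ≫ h.q
      = h.A ◁ ev ≫ (ρ_ h.A).hom := by
    simp only [MonoidalCategory.whiskerLeft_comp, assoc]
    rw [h.q_unit_right]
    rw [← MonoidalCategory.whiskerLeft_comp_assoc, ← MonoidalCategory.whiskerLeft_comp_assoc]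
    simp only [assoc]
    rw [lemC M Ms h.A ev ρM h.eps hM₂]
  rw [hfin]
  rw [MonoidalCategory.whiskerLeft_comp, ← associator_naturality_right_assoc,
    ← whisker_exchange_assoc]
  monoidal
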